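/- Let J ≥ 2 be an integer and let p : Fin J → Fin J → ℝ satisfy p j z ≥ 0 for all j, z and ∑_{j ∈ Fin J} p j z = 1 for every z. Suppose that for every σ : Fin J → Fin J with σ j ≠ j for all j, one has ∑_{j ∈ Fin J} p j (σ j) ≤ 1. Then there exists a probability mass function (PMF) q on Fin J → Fin J such that every d in the support of q has a default choice, and for all j, z ∈ Fin J, q({d : Fin J → Fin J | d z = j}) = p j z. -/

import Mathlib

/-- Sum over boolean functions of a product equals product of binary sums. -/
lemma sum_pi_bool_prod {n : ℕ} (f : Fin n → Bool → ℝ) :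
    ∑ S : Fin n → Bool, ∏ z, f z (S z) = ∏ z, (f z true + f z false) := by
  classical
  rw [show (∏ z, (f z true + f z false)) = ∏ z, ∑ b : Bool, f z b by
    simp]
  rw [Fintype.prod_sum]

/-- Theorem 2 of the paper (sharpness) in the case J₀ = 0. -/
theorem stmt_8 (J : ℕ) (hJ : 2 ≤ J) (p : Fin J → Fin J → ℝ)
    (hpos : ∀ j z, 0 ≤ p j z) (hsum : ∀ z, ∑ j : Fin J, p j z = 1)
    (hineq : ∀ σ : Fin J → Fin J, (∀ j, σ j ≠ j) → ∑ j : Fin J, p j (σ j) ≤ 1) :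
    ∃ q : PMF (Fin J → Fin J),
      (∀ d ∈ q.support, ∃ jstar : Fin J, ∀ j, d j = j ∨ d j = jstar) ∧
      (∀ j z : Fin J,
        q.toOuterMeasure {d : Fin J → Fin J | d z = j} = ENNReal.ofReal (p j z)) := by
  classical
  have hJ0 : 0 < J := by omega
  have hne : ∀ j : Fin J, (Finset.univ.erase j).Nonempty := by
    intro j
    apply Finset.card_pos.mp
    rw [Finset.card_erase_of_mem (Finset.mem_univ j), Finset.card_univ, Fintype.card_fin]
    omega
  set m : Fin J → ℝ := fun j => (Finset.univ.erase j).sup' (hne j) (p j) with hm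
  have hm_ge : ∀ j z, z ≠ j → p j z ≤ m j := fun j z hz =>
    Finset.le_sup' _ (Finset.mem_erase.mpr ⟨hz, Finset.mem_univ z⟩)
  have hm_nonneg : ∀ j, 0 ≤ m j := by
    intro j
    obtain ⟨z, hz⟩ := hne j
    exact le_trans (hpos j z) (Finset.le_sup' _ hz)
  have hm_sum : ∑ j, m j ≤ 1 := by
    choose σ hσ using fun j => Finset.exists_mem_eq_sup' (hne j) (p j)
    have h1 : ∀ j, σ j ≠ j := fun j => (Finset.mem_erase.mp (hσ j).1).1
    calc ∑ j, m j = ∑ j, p j (σ j) := Finset.sum_congr rfl fun j _ => (hσ j).2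
      _ ≤ 1 := hineq σ h1
  set s : ℝ := (1 - ∑ j, m j) / J with hs
  have hs_nonneg : 0 ≤ s := div_nonneg (by linarith) (by positivity)
  set π : Fin J → ℝ := fun j => m j + s with hπ
  have hπ_ge : ∀ j, m j ≤ π j := fun j => by simp [hπ]; linarith
  have hπ_nonneg : ∀ j, 0 ≤ π j := fun j => le_trans (hm_nonneg j) (hπ_ge j)
  have hπ_sum : ∑ j, π j = 1 := by
    simp only [hπ]
    rw [Finset.sum_add_distrib, Finset.sum_const, Finset.card_univ, Fintype.card_fin, hs,
      nsmul_eq_mul]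
    field_simp
    ring
  set r : Fin J → Fin J → ℝ := fun j z =>
    if π j = 0 then 0 else if z = j then 0 else p j z / π j with hr
  have hr_nonneg : ∀ j z, 0 ≤ r j z := by
    intro j z
    simp only [hr]
    split_ifs with h1 h2
    · exact le_refl 0
    · exact le_refl 0
    · exact div_nonneg (hpos j z) (hπ_nonneg j)
  have hr_le_one : ∀ j z, r j z ≤ 1 := by
    intro j z
    simp only [hr]
    split_ifs with h1 h2
    · norm_num
    · norm_num
    · rw [div_le_one (lt_of_le_of_ne (hπ_nonneg j) (Ne.symm h1))]
      exact le_trans (hm_ge j z h2) (hπ_ge j)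
  have hπr : ∀ j z, π j * r j z = if z = j then 0 else p j z := by
    intro j z
    simp only [hr]
    by_cases h1 : π j = 0
    · simp only [h1, if_true, mul_zero, zero_mul]
      split_ifs with h2
      · rfl
      · have : p j z ≤ 0 := le_trans (hm_ge j z h2) (h1 ▸ hπ_ge j)
        linarith [hpos j z]
    · simp only [h1, if_false]
      split_ifs with h2
      · ring
      · field_simp
  -- the weight function
  set w : (Fin J × (Fin J → Bool)) → ℝ := fun x =>
    π x.1 * ∏ z, (if x.2 z then r x.1 z else 1 - r x.1 z) with hw
  have hw_nonneg : ∀ x, 0 ≤ w x := by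
    intro x
    apply mul_nonneg (hπ_nonneg x.1)
    apply Finset.prod_nonneg
    intro z _
    split_ifs
    · exact hr_nonneg _ _
    · linarith [hr_le_one x.1 z]
  have hslice1 : ∀ j', ∑ S : Fin J → Bool, w (j', S) = π j' := by
    intro j'
    simp only [hw, ← Finset.mul_sum]
    rw [sum_pi_bool_prod (fun z b => if b then r j' z else 1 - r j' z)]
    simp
  have hslice2 : ∀ j' z, ∑ S : Fin J → Bool, (if S z then w (j', S) else 0)
      = π j' * r j' z := by
    intro j' z
    have key : ∀ S : Fin J → Bool,
        (if S z then w (j', S) else 0) =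
        π j' * ∏ z', (if z' = z then (if S z' then r j' z' else 0)
          else (if S z' then r j' z' else 1 - r j' z')) := by
      intro S
      by_cases hSz : S z
      · rw [if_pos hSz]
        simp only [hw]
        congr 1
        apply Finset.prod_congr rfl
        intro z' _
        by_cases h : z' = z
        · subst h; simp [hSz]
        · simp [h]
      · rw [if_neg hSz]
        rw [Finset.prod_eq_zero (Finset.mem_univ z) (by simp [hSz])]
        ring
    rw [Finset.sum_congr rfl (fun S _ => key S), ← Finset.mul_sum]
    rw [sum_pi_bool_prod (fun z' b => if z' = z then (if b then r j' z' else 0)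
      else (if b then r j' z' else 1 - r j' z'))]
    congr 1
    rw [Finset.prod_eq_single z]
    · simp
    · intro z' _ h; simp [h]
    · intro h; exact absurd (Finset.mem_univ z) h
  have hw_sum : ∑ x : Fin J × (Fin J → Bool), w x = 1 := by
    rw [Fintype.sum_prod_type]
    rw [Finset.sum_congr rfl (fun j' _ => hslice1 j')]
    exact hπ_sum
  -- the PMF on the index space
  have hq0sum : ∑ x : Fin J × (Fin J → Bool), ENNReal.ofReal (w x) = 1 := by
    rw [← ENNReal.ofReal_sum_of_nonneg (fun x _ => hw_nonneg x), hw_sum, ENNReal.ofReal_one]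
  set q0 : PMF (Fin J × (Fin J → Bool)) :=
    PMF.ofFintype (fun x => ENNReal.ofReal (w x)) hq0sum with hq0
  set φ : (Fin J × (Fin J → Bool)) → (Fin J → Fin J) :=
    fun x z => if x.2 z then x.1 else z with hφ
  refine ⟨q0.map φ, ?_, ?_⟩
  · intro d hd
    rw [PMF.support_map] at hd
    obtain ⟨x, -, rfl⟩ := hd
    refine ⟨x.1, fun z => ?_⟩
    by_cases h : x.2 z
    · right; simp [hφ, h]
    · left; simp [hφ, h]
  · intro j z
    rw [PMF.toOuterMeasure_map_apply, PMF.toOuterMeasure_apply_fintype]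
    have hind : ∀ x : Fin J × (Fin J → Bool),
        (φ ⁻¹' {d | d z = j}).indicator q0 x
          = if (if x.2 z then x.1 else z) = j then ENNReal.ofReal (w x) else 0 := by
      intro x
      have hmem : x ∈ φ ⁻¹' {d | d z = j} ↔ (if x.2 z then x.1 else z) = j := by
        simp [hφ, Set.preimage, Set.mem_setOf_eq]
      rw [Set.indicator_apply, if_congr hmem rfl rfl]
      by_cases h : (if x.2 z then x.1 else z) = j
      · rw [if_pos h, if_pos h]; rfl
      · rw [if_neg h, if_neg h]
    rw [Finset.sum_congr rfl (fun x _ => hind x)]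
    have step : ∀ x : Fin J × (Fin J → Bool),
        (if (if x.2 z then x.1 else z) = j then ENNReal.ofReal (w x) else 0)
          = ENNReal.ofReal (if (if x.2 z then x.1 else z) = j then w x else 0) := by
      intro x; split_ifs <;> simp
    rw [Finset.sum_congr rfl (fun x _ => step x),
      ← ENNReal.ofReal_sum_of_nonneg (fun x _ => by split_ifs <;> first | exact hw_nonneg x | exact le_refl 0)]
    congr 1
    -- real computation
    rw [Fintype.sum_prod_type]
    by_cases hjz : j = z
    · subst hjz
      have inner : ∀ j' : Fin J,
          ∑ S : Fin J → Bool, (if (if S j then j' else j) = j then w (j', S) else 0)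
            = π j' - π j' * r j' j := by
        intro j'
        by_cases h : j' = j
        · subst h
          simp only [ite_self, eq_self_iff_true, if_true]
          rw [hslice1]
          have : r j' j' = 0 := by
            simp only [hr]; split_ifs <;> rfl
          rw [this]; ring
        · have : ∀ S : Fin J → Bool,
              (if (if S j then j' else j) = j then w (j', S) else 0)
                = w (j', S) - (if S j then w (j', S) else 0) := by
            intro S
            by_cases hS : S j
            · simp [hS, h]
            · simp [hS]
          rw [Finset.sum_congr rfl (fun S _ => this S), Finset.sum_sub_distrib,
            hslice1, hslice2]
      rw [Finset.sum_congr rfl (fun j' _ => inner j'), Finset.sum_sub_distrib, hπ_sum]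
      have : ∑ j' : Fin J, π j' * r j' j = ∑ j' : Fin J, (if j = j' then 0 else p j' j) := by
        exact Finset.sum_congr rfl fun j' _ => hπr j' j
      rw [this]
      have h2 : ∑ j' : Fin J, (if j = j' then 0 else p j' j)
          = (∑ j' : Fin J, p j' j) - p j j := by
        rw [show (∑ j' : Fin J, p j' j) = ∑ j' : Fin J, ((if j = j' then 0 else p j' j)
          + (if j = j' then p j' j else 0)) from Finset.sum_congr rfl
            (fun j' _ => by split_ifs <;> ring), Finset.sum_add_distrib]
        rw [Finset.sum_ite_eq Finset.univ j (fun j' => p j' j), if_pos (Finset.mem_univ j)]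
        ring
      rw [h2, hsum j]
      ring
    · have inner : ∀ j' : Fin J,
          ∑ S : Fin J → Bool, (if (if S z then j' else z) = j then w (j', S) else 0)
            = if j' = j then π j' * r j' z else 0 := by
        intro j'
        by_cases h : j' = j
        · subst h
          rw [if_pos rfl, ← hslice2 j' z]
          apply Finset.sum_congr rfl
          intro S _
          by_cases hS : S z
          · simp [hS]
          · simp [hS, Ne.symm hjz]
        · rw [if_neg h]
          apply Finset.sum_eq_zero
          intro S _
          by_cases hS : S z
          · simp [hS, h]
          · simp [hS, Ne.symm hjz]
      rw [Finset.sum_congr rfl (fun j' _ => inner j'),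
        Finset.sum_ite_eq' Finset.univ j (fun j' => π j' * r j' z),
        if_pos (Finset.mem_univ j), hπr]
      rw [if_neg (Ne.symm hjz)]
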